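/- Let γ ∈ (0,1) and let h₀ : (0,∞) → ℝ satisfy h₀(y/γ²) = h₀(y)/γ for all y > 0. If h denotes the pointwise infimum of all nonnegative concave majorants of h₀ (assumed finite), then h also satisfies h(y/γ²) = h(y)/γ for all y > 0, and h is itself a nonnegative concave majorant of h₀. -/

import Mathlib

open Set

/-- A positive rescaling of a concave function on `(0,∞)` is concave. -/
lemma concave_scale_aux {g : ℝ → ℝ} (c d : ℝ) (hc : 0 < c) (hd : 0 ≤ d)
    (hg : ConcaveOn ℝ (Set.Ioi 0) g) :
    ConcaveOn ℝ (Set.Ioi 0) (fun z => d * g (c * z)) := by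
  refine ⟨convex_Ioi 0, fun x hx y hy a b ha hb hab => ?_⟩
  have hx' : c * x ∈ Set.Ioi (0:ℝ) := mul_pos hc hx
  have hy' : c * y ∈ Set.Ioi (0:ℝ) := mul_pos hc hy
  have H := hg.2 hx' hy' ha hb hab
  simp only [smul_eq_mul] at H ⊢
  have hrw : c * (a * x + b * y) = a * (c * x) + b * (c * y) := by ring
  rw [hrw]
  calc a * (d * g (c * x)) + b * (d * g (c * y))
      = d * (a * g (c * x) + b * g (c * y)) := by ring
    _ ≤ d * g (a * (c * x) + b * (c * y)) := mul_le_mul_of_nonneg_left H hd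

/-- Let `γ ∈ (0,1)` and `h₀ : (0,∞) → ℝ` satisfy `h₀(y/γ²) = h₀(y)/γ`. If `h` is the
pointwise infimum of the (nonempty) family `S` of all nonnegative concave majorants of `h₀`
on `(0,∞)`, then `h` satisfies the same scaling relation and `h` is itself a nonnegative
concave majorant of `h₀` (i.e. `h ∈ S`). -/
theorem mcm_scaling (γ : ℝ) (hγ : γ ∈ Set.Ioo (0:ℝ) 1) (h₀ : ℝ → ℝ)
    (hscale₀ : ∀ y > (0:ℝ), h₀ (y / γ ^ 2) = h₀ y / γ)
    (S : Set (ℝ → ℝ))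
    (hS : S = {g : ℝ → ℝ | ConcaveOn ℝ (Set.Ioi 0) g ∧ (∀ y ∈ Set.Ioi (0:ℝ), 0 ≤ g y) ∧
      ∀ y ∈ Set.Ioi (0:ℝ), h₀ y ≤ g y})
    (hne : S.Nonempty)
    (h : ℝ → ℝ) (hh : ∀ y, h y = sInf ((fun g : ℝ → ℝ => g y) '' S)) :
    (∀ y > (0:ℝ), h (y / γ ^ 2) = h y / γ) ∧ h ∈ S := by
  obtain ⟨hγ0, hγ1⟩ := hγ
  have hγ2 : (0:ℝ) < γ ^ 2 := by positivity
  -- basic facts about the infimum at positive points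
  have hbdd : ∀ y ∈ Set.Ioi (0:ℝ), BddBelow ((fun g : ℝ → ℝ => g y) '' S) := by
    intro y hy
    refine ⟨0, ?_⟩
    rintro v ⟨g, hg, rfl⟩
    rw [hS] at hg
    exact hg.2.1 y hy
  have hneim : ∀ y : ℝ, ((fun g : ℝ → ℝ => g y) '' S).Nonempty := fun y => hne.image _
  have h_le : ∀ g ∈ S, ∀ y ∈ Set.Ioi (0:ℝ), h y ≤ g y := by
    intro g hg y hy
    rw [hh]
    exact csInf_le (hbdd y hy) ⟨g, hg, rfl⟩
  have h_ge : ∀ (y : ℝ) (c : ℝ), (∀ g ∈ S, c ≤ g y) → c ≤ h y := by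
    intro y c hc
    rw [hh]
    exact le_csInf (hneim y) (by rintro v ⟨g, hg, rfl⟩; exact hc g hg)
  -- the scaling of h₀ in the other direction
  have hscale₀' : ∀ z > (0:ℝ), h₀ (γ ^ 2 * z) = γ * h₀ z := by
    intro z hz
    have := hscale₀ (γ ^ 2 * z) (by positivity)
    have harg : γ ^ 2 * z / γ ^ 2 = z := by field_simp
    rw [harg] at this
    rw [this]
    field_simp
  -- the two scaling maps preserve S
  have hmemT : ∀ g ∈ S, (fun z => γ⁻¹ * g (γ ^ 2 * z)) ∈ S := by
    intro g hg
    rw [hS] at hg ⊢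
    obtain ⟨hgc, hg0, hgm⟩ := hg
    refine ⟨concave_scale_aux _ _ hγ2 (by positivity) hgc, ?_, ?_⟩
    · intro y hy
      have := hg0 (γ ^ 2 * y) (mul_pos hγ2 hy)
      positivity
    · intro y hy
      have h1 := hscale₀' y hy
      have h2 := hgm (γ ^ 2 * y) (mul_pos hγ2 hy)
      rw [h1] at h2
      calc h₀ y = γ⁻¹ * (γ * h₀ y) := by field_simp
        _ ≤ γ⁻¹ * g (γ ^ 2 * y) := by gcongr
  have hmemT' : ∀ g ∈ S, (fun z => γ * g ((γ ^ 2)⁻¹ * z)) ∈ S := by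
    intro g hg
    rw [hS] at hg ⊢
    obtain ⟨hgc, hg0, hgm⟩ := hg
    refine ⟨concave_scale_aux _ _ (by positivity) (le_of_lt hγ0) hgc, ?_, ?_⟩
    · intro y hy
      have := hg0 ((γ ^ 2)⁻¹ * y) (mul_pos (inv_pos.2 hγ2) hy)
      positivity
    · intro y hy
      have h1 := hscale₀ y hy
      have h2 := hgm (y / γ ^ 2) (by exact div_pos hy hγ2)
      rw [h1] at h2
      have : y / γ ^ 2 = (γ ^ 2)⁻¹ * y := by ring
      rw [this] at h2
      calc h₀ y = γ * (h₀ y / γ) := by field_simp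
        _ ≤ γ * g ((γ ^ 2)⁻¹ * y) := by gcongr
  -- the scaling relation for h
  have hscaleh : ∀ y > (0:ℝ), h (y / γ ^ 2) = h y / γ := by
    intro y hy
    have hy' : y / γ ^ 2 ∈ Set.Ioi (0:ℝ) := div_pos hy hγ2
    have hA : γ * h (y / γ ^ 2) ≤ h y := by
      apply h_ge
      intro g hg
      have := h_le _ (hmemT g hg) (y / γ ^ 2) hy'
      have harg : γ ^ 2 * (y / γ ^ 2) = y := by field_simp
      rw [harg] at this
      calc γ * h (y / γ ^ 2) ≤ γ * (γ⁻¹ * g y) := by gcongr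
        _ = g y := by field_simp
    have hB : h y / γ ≤ h (y / γ ^ 2) := by
      apply h_ge
      intro g hg
      have := h_le _ (hmemT' g hg) y (mem_Ioi.2 hy)
      have harg : (γ ^ 2)⁻¹ * y = y / γ ^ 2 := by ring
      rw [harg] at this
      rw [div_le_iff₀ hγ0, mul_comm]
      exact this
    have hA' : h (y / γ ^ 2) ≤ h y / γ := by
      rw [le_div_iff₀ hγ0]
      linarith [mul_comm γ (h (y / γ ^ 2))]
    exact le_antisymm hA' hB
  refine ⟨hscaleh, ?_⟩
  rw [hS]
  refine ⟨⟨convex_Ioi 0, ?_⟩, ?_, ?_⟩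
  · intro x hx y hy a b ha hb hab
    simp only [smul_eq_mul]
    apply h_ge
    intro g hg
    rw [hS] at hg
    obtain ⟨hgc, hg0, hgm⟩ := hg
    have := hgc.2 hx hy ha hb hab
    simp only [smul_eq_mul] at this
    have h1 : h x ≤ g x := h_le g (by rw [hS]; exact ⟨hgc, hg0, hgm⟩) x hx
    have h2 : h y ≤ g y := h_le g (by rw [hS]; exact ⟨hgc, hg0, hgm⟩) y hy
    nlinarith
  · intro y hy
    apply h_ge
    intro g hg
    rw [hS] at hg
    exact hg.2.1 y hy
  · intro y hy
    apply h_ge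
    intro g hg
    rw [hS] at hg
    exact hg.2.2 y hy
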